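/- Let (p_i)_{i≥0} be nonnegative reals summing to 1, b ≥ 2 an integer, and g(k) = ⌈k/2⌉. Define p_i^1 = {p_i}_{g(1)} for i ≥ 1, p_0^1 = 1 - ∑_{i≥1} p_i^1, and inductively p_i^{k+1} = (1/b)·p_i^k + {((b-1)/b)·p_i}_{g(k+1)} for i ≥ 1, p_0^{k+1} = 1 - ∑_{i≥1} p_i^{k+1}. Then for all i ≥ 1 and k ≥ 1, p_i - k/b^{g(k)} ≤ p_i^k ≤ p_i. -/
import Mathlib


/-- Truncation of `y` to its first `m` base-`b` digits. -/
noncomputable def trunc (b : ℕ) (y : ℝ) (m : ℕ) : ℝ := ⌊y * (b : ℝ) ^ m⌋ / (b : ℝ) ^ m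

/-- `g k = ⌈k/2⌉`. -/
def g (k : ℕ) : ℕ := (k + 1) / 2

lemma trunc_le' {b : ℕ} (hb : 2 ≤ b) (y : ℝ) (m : ℕ) : trunc b y m ≤ y := by
  have hbpos : (0:ℝ) < (b:ℝ) ^ m := by positivity
  rw [trunc, div_le_iff₀ hbpos]
  exact Int.floor_le _

lemma le_trunc' {b : ℕ} (hb : 2 ≤ b) (y : ℝ) (m : ℕ) :
    y - 1 / (b:ℝ) ^ m ≤ trunc b y m := by
  have hbpos : (0:ℝ) < (b:ℝ) ^ m := by positivity
  rw [trunc, le_div_iff₀ hbpos]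
  have h1 : (1 / (b:ℝ) ^ m) * (b:ℝ) ^ m = 1 := by field_simp
  nlinarith [Int.sub_one_lt_floor (y * (b:ℝ) ^ m)]

theorem approx_bounds (b : ℕ) (hb : 2 ≤ b) (p : ℕ → ℝ) (hp : ∀ i, 0 ≤ p i)
    (hsum : Summable p) (htot : ∑' i, p i = 1)
    (P : ℕ → ℕ → ℝ)
    (hP1 : ∀ i, 1 ≤ i → P i 1 = trunc b (p i) (g 1))
    (hP0 : ∀ k, 1 ≤ k → P 0 k = 1 - ∑' i, P (i + 1) k)
    (hPrec : ∀ k, 1 ≤ k → ∀ i, 1 ≤ i →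
      P i (k + 1) = (1 / (b : ℝ)) * P i k + trunc b (((b : ℝ) - 1) / b * p i) (g (k + 1))) :
    ∀ i : ℕ, 1 ≤ i → ∀ k : ℕ, 1 ≤ k →
      p i - (k : ℝ) / (b : ℝ) ^ (g k) ≤ P i k ∧ P i k ≤ p i := by
  have hbR : (2:ℝ) ≤ (b:ℝ) := by exact_mod_cast hb
  have hbpos : (0:ℝ) < b := by linarith
  intro i hi k hk
  induction k with
  | zero => omega
  | succ k ih =>
    rcases Nat.eq_or_lt_of_le hk with h1 | h2
    · -- k + 1 = 1
      have hk0 : k = 0 := by omega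
      subst hk0
      rw [hP1 i hi]
      constructor
      · have := le_trunc' hb (p i) (g 1)
        simpa using this
      · exact trunc_le' hb _ _
    · have hk1 : 1 ≤ k := by omega
      obtain ⟨hlow, hupp⟩ := ih hk1
      rw [hPrec k hk1 i hi]
      have hgp : (b:ℝ) ^ (g (k+1)) ≤ (b:ℝ) * (b:ℝ) ^ (g k) := by
        have : g (k+1) ≤ g k + 1 := by unfold g; omega
        calc (b:ℝ) ^ (g (k+1)) ≤ (b:ℝ) ^ (g k + 1) :=
              pow_le_pow_right₀ (by linarith) this
          _ = (b:ℝ) * (b:ℝ) ^ (g k) := by ring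
      have hpow1 : (0:ℝ) < (b:ℝ) ^ (g k) := by positivity
      have hpow2 : (0:ℝ) < (b:ℝ) ^ (g (k+1)) := by positivity
      constructor
      · have htr := le_trunc' hb (((b:ℝ) - 1) / b * p i) (g (k+1))
        have hmul : (1 / (b:ℝ)) * (p i - (k:ℝ) / (b:ℝ) ^ (g k)) ≤ (1 / (b:ℝ)) * P i k :=
          mul_le_mul_of_nonneg_left hlow (by positivity)
        have key : (k:ℝ) / ((b:ℝ) * (b:ℝ) ^ (g k)) ≤ (k:ℝ) / (b:ℝ) ^ (g (k+1)) :=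
          div_le_div_of_nonneg_left (by positivity) hpow2 hgp
        have hbne : (b:ℝ) ≠ 0 := by positivity
        push_cast
        have expand : (1 / (b:ℝ)) * (p i - (k:ℝ) / (b:ℝ) ^ (g k)) +
            (((b:ℝ) - 1) / b * p i - 1 / (b:ℝ) ^ (g (k+1)))
            = p i - (k:ℝ) / ((b:ℝ) * (b:ℝ) ^ (g k)) - 1 / (b:ℝ) ^ (g (k+1)) := by
          field_simp
          ring
        have : p i - ((k:ℝ) + 1) / (b:ℝ) ^ (g (k+1)) ≤
            p i - (k:ℝ) / ((b:ℝ) * (b:ℝ) ^ (g k)) - 1 / (b:ℝ) ^ (g (k+1)) := by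
          rw [add_div]
          linarith
        linarith [expand, hmul, htr, this]
      · have htr := trunc_le' hb (((b:ℝ) - 1) / b * p i) (g (k+1))
        have hmul : (1 / (b:ℝ)) * P i k ≤ (1 / (b:ℝ)) * p i :=
          mul_le_mul_of_nonneg_left hupp (by positivity)
        have : (1 / (b:ℝ)) * p i + ((b:ℝ) - 1) / b * p i = p i := by
          field_simp
          ring
        linarith
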